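/- Suppose F_λ is a CDF with F_λ(x) ~ x^{MN} as x → 0⁺ (i.e., lim_{x→0⁺} F_λ(x)/x^{MN} = 1), and let ϱ_m, ϱ_{m'} > 0. Then the function P(p) = F_λ(Mϱ_m/p) + F_λ(Mϱ_{m'}/p) − F_λ(Mϱ_m/p)F_λ(Mϱ_{m'}/p) satisfies lim_{p→∞} P(p)·(p/M)^{MN} = ϱ_m^{MN} + ϱ_{m'}^{MN}; hence its diversity order is MN. -/

import Mathlib

open Filter Topology

/-- If a CDF `F` satisfies `F(x) ~ x^{MN}` as `x → 0⁺`, then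
`P(p) = F(Mϱ_m/p) + F(Mϱ_{m'}/p) − F(Mϱ_m/p)F(Mϱ_{m'}/p)` satisfies
`lim_{p→∞} P(p)(p/M)^{MN} = ϱ_m^{MN} + ϱ_{m'}^{MN}`; hence the diversity order is `MN`. -/
theorem stmt_10 (M N : ℕ) (hM : 0 < M) (hN : 0 < N)
    (F : ℝ → ℝ) (hmono : Monotone F) (hF01 : ∀ x, 0 ≤ F x ∧ F x ≤ 1)
    (hF : Tendsto (fun x : ℝ => F x / x ^ (M * N)) (nhdsWithin 0 (Set.Ioi 0)) (𝓝 1))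
    (ϱm ϱm' : ℝ) (hϱm : 0 < ϱm) (hϱm' : 0 < ϱm') :
    Tendsto
      (fun p : ℝ =>
        (F ((M : ℝ) * ϱm / p) + F ((M : ℝ) * ϱm' / p)
          - F ((M : ℝ) * ϱm / p) * F ((M : ℝ) * ϱm' / p)) * (p / M) ^ (M * N))
      atTop (𝓝 (ϱm ^ (M * N) + ϱm' ^ (M * N)))
    ∧ Tendsto
        (fun p : ℝ =>
          -(Real.logb 2 (F ((M : ℝ) * ϱm / p) + F ((M : ℝ) * ϱm' / p)
              - F ((M : ℝ) * ϱm / p) * F ((M : ℝ) * ϱm' / p)) / Real.logb 2 p))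
        atTop (𝓝 ((M * N : ℕ) : ℝ)) := by
  set k := M * N with hk
  have hkpos : 0 < k := Nat.mul_pos hM hN
  have hMpos : (0:ℝ) < M := Nat.cast_pos.mpr hM
  have hdiv : ∀ c : ℝ, 0 < c → Tendsto (fun p : ℝ => c / p) atTop (𝓝[>] 0) := by
    intro c hc
    rw [tendsto_nhdsWithin_iff]
    constructor
    · have := tendsto_inv_atTop_zero.const_mul c
      simpa [div_eq_mul_inv] using this
    · filter_upwards [eventually_gt_atTop 0] with p hp
      exact div_pos hc hp
  have hratio : ∀ c : ℝ, 0 < c →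
      Tendsto (fun p : ℝ => F (c / p) / (c / p) ^ k) atTop (𝓝 1) :=
    fun c hc => hF.comp (hdiv c hc)
  have hterm : ∀ c : ℝ, 0 < c →
      Tendsto (fun p : ℝ => F (c / p) * (p / M) ^ k) atTop (𝓝 ((c / M) ^ k)) := by
    intro c hc
    have h := (hratio c hc).mul_const ((c / M) ^ k)
    rw [one_mul] at h
    refine h.congr' ?_
    filter_upwards [eventually_gt_atTop 0] with p hp
    have hcp : (c / p) ^ k ≠ 0 := pow_ne_zero _ (ne_of_gt (div_pos hc hp))
    field_simp
    rw [mul_assoc, ← mul_pow, div_mul_div_comm, mul_comm p, mul_div_mul_right _ _ hp.ne']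
  have hFzero : ∀ c : ℝ, 0 < c →
      Tendsto (fun p : ℝ => F (c / p)) atTop (𝓝 0) := by
    intro c hc
    have hMp : Tendsto (fun p : ℝ => ((M:ℝ) / p) ^ k) atTop (𝓝 0) := by
      have h0 : Tendsto (fun p : ℝ => (M:ℝ) / p) atTop (𝓝 0) := by
        have := tendsto_inv_atTop_zero.const_mul (M:ℝ)
        simpa [div_eq_mul_inv] using this
      have := h0.pow k
      simpa [zero_pow hkpos.ne'] using this
    have h := (hterm c hc).mul hMp
    rw [mul_zero] at h
    refine h.congr' ?_
    filter_upwards [eventually_gt_atTop 0] with p hp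
    have h1 : (p / (M:ℝ)) * ((M:ℝ) / p) = 1 := by field_simp
    have : (p / (M:ℝ)) ^ k * ((M:ℝ) / p) ^ k = 1 := by rw [← mul_pow, h1, one_pow]
    calc F (c / p) * (p / ↑M) ^ k * (↑M / p) ^ k
        = F (c / p) * ((p / ↑M) ^ k * (↑M / p) ^ k) := by ring
      _ = F (c / p) := by rw [this, mul_one]
  have hc1 : (0:ℝ) < (M:ℝ) * ϱm := mul_pos hMpos hϱm
  have hc2 : (0:ℝ) < (M:ℝ) * ϱm' := mul_pos hMpos hϱm'
  have he1 : ((M:ℝ) * ϱm / M) = ϱm := by field_simp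
  have he2 : ((M:ℝ) * ϱm' / M) = ϱm' := by field_simp
  have hA := hterm _ hc1
  have hB := hterm _ hc2
  rw [he1] at hA
  rw [he2] at hB
  have hF2 := hFzero _ hc2
  have part1 : Tendsto
      (fun p : ℝ =>
        (F ((M : ℝ) * ϱm / p) + F ((M : ℝ) * ϱm' / p)
          - F ((M : ℝ) * ϱm / p) * F ((M : ℝ) * ϱm' / p)) * (p / M) ^ k)
      atTop (𝓝 (ϱm ^ k + ϱm' ^ k)) := by
    have h := (hA.add hB).sub (hA.mul hF2)
    rw [mul_zero, sub_zero] at h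
    refine h.congr fun p => ?_
    ring
  refine ⟨part1, ?_⟩
  -- second part
  set L := ϱm ^ k + ϱm' ^ k with hL
  have hLpos : 0 < L := add_pos (pow_pos hϱm k) (pow_pos hϱm' k)
  set P : ℝ → ℝ := fun p => F ((M : ℝ) * ϱm / p) + F ((M : ℝ) * ϱm' / p)
          - F ((M : ℝ) * ϱm / p) * F ((M : ℝ) * ϱm' / p) with hP
  set Q : ℝ → ℝ := fun p => P p * (p / M) ^ k with hQ
  have hQL : Tendsto Q atTop (𝓝 L) := part1
  have hQpos : ∀ᶠ p in atTop, 0 < Q p :=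
    hQL.eventually (eventually_gt_nhds hLpos)
  have hlogQ : Tendsto (fun p => Real.logb 2 (Q p)) atTop (𝓝 (Real.logb 2 L)) := by
    have hc : ContinuousAt (Real.logb 2) L := Real.continuousAt_logb hLpos.ne'
    exact hc.tendsto.comp hQL
  have hlogp : Tendsto (fun p : ℝ => Real.logb 2 p) atTop atTop :=
    Real.tendsto_logb_atTop (by norm_num)
  have t1 : Tendsto (fun p : ℝ => Real.logb 2 (Q p) / Real.logb 2 p) atTop (𝓝 0) :=
    hlogQ.div_atTop hlogp
  have t2 : Tendsto (fun p : ℝ => (k:ℝ) * Real.logb 2 (M:ℝ) / Real.logb 2 p) atTop (𝓝 0) :=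
    tendsto_const_nhds.div_atTop hlogp
  have tmain : Tendsto (fun p : ℝ =>
      -(Real.logb 2 (Q p) / Real.logb 2 p) - (k:ℝ) * Real.logb 2 (M:ℝ) / Real.logb 2 p + k)
      atTop (𝓝 ((k:ℝ))) := by
    have h := ((t1.neg.sub t2).add_const (k:ℝ))
    simpa using h
  have : Tendsto (fun p : ℝ => -(Real.logb 2 (P p) / Real.logb 2 p)) atTop (𝓝 ((k:ℝ))) := by
    refine tmain.congr' ?_
    filter_upwards [hQpos, eventually_gt_atTop (1:ℝ)] with p hQp hp1
    have hp0 : (0:ℝ) < p := lt_trans one_pos hp1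
    have hMp : (0:ℝ) < (M:ℝ) / p := div_pos hMpos hp0
    have hPeq : P p = Q p * ((M:ℝ) / p) ^ k := by
      have h1 : ((p / (M:ℝ)) * ((M:ℝ) / p)) = 1 := by field_simp
      have : (p / (M:ℝ)) ^ k * ((M:ℝ) / p) ^ k = 1 := by rw [← mul_pow, h1, one_pow]
      rw [hQ]
      calc P p = P p * ((p / (M:ℝ)) ^ k * ((M:ℝ) / p) ^ k) := by rw [this, mul_one]
        _ = P p * (p / (M:ℝ)) ^ k * ((M:ℝ) / p) ^ k := by ring
    have hlogP : Real.logb 2 (P p)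
        = Real.logb 2 (Q p) + (k:ℝ) * (Real.logb 2 (M:ℝ) - Real.logb 2 p) := by
      rw [hPeq, Real.logb_mul hQp.ne' (pow_ne_zero _ hMp.ne'), Real.logb_pow,
        Real.logb_div hMpos.ne' hp0.ne']
    have hlp : Real.logb 2 p ≠ 0 := (Real.logb_pos (by norm_num) hp1).ne'
    rw [hlogP]
    field_simp
    ring
  have hcast : ((M * N : ℕ) : ℝ) = (k:ℝ) := by rw [hk]
  rw [hcast]
  exact this
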